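/- Let d ≥ 1 and r > 0. For every measurable w : ℝ^d → [0,1] and every bounded integrable φ : ℝ^d → ℝ, ∫_{ℝ^d} ∫_{ℝ^d} φ(z₁) φ(z₂) σ^{(r)}_{z₁,z₂}(w) dz₁ dz₂ = ∫_{ℝ^d} [ ⟨w⟩(x,r) · (⟨φ·(1−w)⟩(x,r))² + (1 − ⟨w⟩(x,r)) · (⟨φ·w⟩(x,r))² ] dx. -/

import Mathlib

open MeasureTheory Metric

/-- The average of `φ` over the ball of centre `x` and radius `r`. -/
noncomputable def ballAvg (d : ℕ) (φ : EuclideanSpace ℝ (Fin d) → ℝ)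
    (x : EuclideanSpace ℝ (Fin d)) (r : ℝ) : ℝ :=
  (volume (ball (0 : EuclideanSpace ℝ (Fin d)) r)).toReal⁻¹ * ∫ y in ball x r, φ y

/-- `σ^{(r)}_{z₁,z₂}(w)`, the infinitesimal reproduction covariance of the SLFV. -/
noncomputable def sigmaR (d : ℕ) (r : ℝ) (w : EuclideanSpace ℝ (Fin d) → ℝ)
    (z₁ z₂ : EuclideanSpace ℝ (Fin d)) : ℝ :=
  ((volume (ball (0 : EuclideanSpace ℝ (Fin d)) r)).toReal ^ 2)⁻¹ *
    ∫ x in ball z₁ r ∩ ball z₂ r,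
      (ballAvg d w x r * (1 - w z₁) * (1 - w z₂) +
        (1 - ballAvg d w x r) * w z₁ * w z₂)

namespace SigmaRAux

variable {d : ℕ} {r : ℝ}

local notation "Eu" => EuclideanSpace ℝ (Fin d)

lemma vol_ball_eq (x : Eu) : volume (ball x r) = volume (ball (0 : Eu) r) :=
  Measure.addHaar_ball_center volume x r

lemma ms_pair : MeasurableSet {p : Eu × Eu | dist p.2 p.1 < r} :=
  (isOpen_lt (continuous_snd.dist continuous_fst) continuous_const).measurableSet

lemma indicator_ball_eq (z : Eu) (g : Eu → ℝ) :
    (ball z r).indicator g = fun x => if dist x z < r then g x else 0 := by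
  funext x
  by_cases h : dist x z < r
  · rw [if_pos h, Set.indicator_of_mem (mem_ball.mpr h)]
  · rw [if_neg h, Set.indicator_of_notMem (fun hc => h (mem_ball.mp hc))]

lemma meas_aux (ν : Measure Eu) [SFinite ν] (b : Eu → ℝ) (hb : Measurable b) :
    Measurable fun z : Eu => ∫ x, (ball z r).indicator b x ∂ν := by
  have h1 : (fun z : Eu => ∫ x, (ball z r).indicator b x ∂ν)
      = fun z => ∫ x, (fun z x => if dist x z < r then b x else 0) z x ∂ν := by
    funext z
    rw [indicator_ball_eq]
  rw [h1]
  apply StronglyMeasurable.measurable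
  apply StronglyMeasurable.integral_prod_right
  apply Measurable.stronglyMeasurable
  exact Measurable.ite ms_pair (hb.comp measurable_snd) measurable_const

lemma indicator_abs_le {b : Eu → ℝ} {C : ℝ} (hC : 0 ≤ C) (hb : ∀ x, |b x| ≤ C)
    (s : Set Eu) (x : Eu) : |s.indicator b x| ≤ C := by
  by_cases h : x ∈ s
  · rw [Set.indicator_of_mem h]; exact hb x
  · rw [Set.indicator_of_notMem h, abs_zero]; exact hC

lemma bound_setIntegral {h : Eu → ℝ} {C : ℝ} (hC : ∀ x, |h x| ≤ C) {s : Set Eu}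
    (hs : volume s ≠ ⊤) : |∫ x in s, h x| ≤ C * (volume s).toReal := by
  haveI : IsFiniteMeasure (volume.restrict s) :=
    ⟨by rwa [Measure.restrict_apply_univ, lt_top_iff_ne_top]⟩
  have := norm_integral_le_of_norm_le_const (μ := volume.restrict s) (f := h) (C := C)
    (Filter.Eventually.of_forall fun x => by rw [Real.norm_eq_abs]; exact hC x)
  rwa [Real.norm_eq_abs, measureReal_restrict_apply_univ, measureReal_def] at this

lemma integrableOn_bdd {h : Eu → ℝ} (hm : Measurable h) {C : ℝ} (hC : ∀ x, |h x| ≤ C)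
    {s : Set Eu} (hs : volume s ≠ ⊤) : IntegrableOn h s volume := by
  refine Integrable.mono' (g := fun _ => C) ?_ hm.aestronglyMeasurable.restrict
    (Filter.Eventually.of_forall fun x => by rw [Real.norm_eq_abs]; exact hC x)
  exact integrableOn_const hs

lemma key_int (hr : 0 < r) {f b : Eu → ℝ} (hfm : Measurable f) (hfi : Integrable f volume)
    (hbm : Measurable b) {C : ℝ} (hb : ∀ x, |b x| ≤ C) :
    Integrable (fun p : Eu × Eu => if dist p.2 p.1 < r then f p.1 * b p.2 else 0)
      (volume.prod volume) := by
  have hC : 0 ≤ C := le_trans (abs_nonneg _) (hb 0)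
  have hKm : Measurable (fun p : Eu × Eu => if dist p.2 p.1 < r then f p.1 * b p.2 else 0) :=
    Measurable.ite ms_pair ((hfm.comp measurable_fst).mul (hbm.comp measurable_snd))
      measurable_const
  have hsec : ∀ z : Eu, (fun x => if dist x z < r then f z * b x else 0)
      = (ball z r).indicator fun x => f z * b x := by
    intro z; rw [indicator_ball_eq]
  have hsecInt : ∀ z : Eu, IntegrableOn (fun x => f z * b x) (ball z r) volume := by
    intro z
    refine integrableOn_bdd (measurable_const.mul hbm) (C := |f z| * C) ?_ measure_ball_lt_top.ne
    intro x; simp only [Pi.mul_apply]; rw [abs_mul]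
    exact mul_le_mul_of_nonneg_left (hb x) (abs_nonneg _)
  rw [integrable_prod_iff hKm.aestronglyMeasurable]
  constructor
  · refine Filter.Eventually.of_forall fun z => ?_
    have h2 : (fun y => if dist (z, y).2 (z, y).1 < r then f (z, y).1 * b (z, y).2 else 0)
        = (ball z r).indicator fun x => f z * b x := hsec z
    rw [h2]
    exact (hsecInt z).integrable_indicator measurableSet_ball
  · set V : ℝ := (volume (ball (0 : Eu) r)).toReal with hV
    refine Integrable.mono' (g := fun z => |f z| * (C * V)) ((hfi.abs).mul_const _) ?_ ?_
    · apply StronglyMeasurable.aestronglyMeasurable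
      apply StronglyMeasurable.integral_prod_right
        (f := fun z x => ‖if dist x z < r then f z * b x else 0‖)
      exact (hKm.norm).stronglyMeasurable
    · refine Filter.Eventually.of_forall fun z => ?_
      rw [Real.norm_eq_abs]
      have hnn : 0 ≤ ∫ x, ‖if dist (z, x).2 (z, x).1 < r then f (z, x).1 * b (z, x).2 else 0‖ :=
        integral_nonneg fun x => norm_nonneg _
      rw [abs_of_nonneg hnn]
      have hle : ∀ x : Eu, ‖if dist x z < r then f z * b x else 0‖
          ≤ (ball z r).indicator (fun _ => |f z| * C) x := by
        intro x
        by_cases h : dist x z < r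
        · rw [if_pos h, Set.indicator_of_mem (mem_ball.mpr h), Real.norm_eq_abs, abs_mul]
          exact mul_le_mul_of_nonneg_left (hb x) (abs_nonneg _)
        · rw [if_neg h, Set.indicator_of_notMem (fun hc => h (mem_ball.mp hc)), norm_zero]
      have hint1 : Integrable fun x : Eu => ‖if dist x z < r then f z * b x else 0‖ := by
        rw [show (fun x : Eu => ‖if dist x z < r then f z * b x else 0‖)
            = fun x => ‖((ball z r).indicator fun x => f z * b x) x‖ from by rw [← hsec z]]
        exact ((hsecInt z).integrable_indicator measurableSet_ball).norm
      have hint2 : Integrable ((ball z r).indicator (fun _ : Eu => |f z| * C)) :=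
        (integrableOn_const (C := |f z| * C) measure_ball_lt_top.ne).integrable_indicator
          measurableSet_ball
      calc ∫ x, ‖if dist x z < r then f z * b x else 0‖
          ≤ ∫ x, (ball z r).indicator (fun _ => |f z| * C) x :=
            integral_mono hint1 hint2 hle
        _ = (volume (ball z r)).toReal • (|f z| * C) := by
            rw [integral_indicator measurableSet_ball, setIntegral_const, measureReal_def]
        _ = |f z| * (C * V) := by rw [vol_ball_eq, smul_eq_mul, ← hV]; ring

lemma core (hr : 0 < r) {s : Set Eu} (hs : MeasurableSet s) {f b : Eu → ℝ}
    (hfm : Measurable f) (hfi : Integrable f volume) (hbm : Measurable b) {C : ℝ}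
    (hb : ∀ x, |b x| ≤ C) :
    ∫ z, f z * (∫ x in s, (ball z r).indicator b x)
      = ∫ x in s, b x * (∫ z in ball x r, f z) := by
  have hK : Integrable (Function.uncurry fun (z x : Eu) => if dist x z < r then f z * b x else 0)
      (volume.prod (volume.restrict s)) := by
    have h1 := key_int hr hfm hfi hbm hb
    have h2 : volume.prod (volume.restrict s)
        = ((volume.prod volume).restrict ((Set.univ : Set Eu) ×ˢ s)) := by
      rw [← Measure.prod_restrict, Measure.restrict_univ]
    rw [h2]
    exact h1.restrict
  have swap := integral_integral_swap hK
  calc ∫ z, f z * (∫ x in s, (ball z r).indicator b x)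
      = ∫ z, ∫ x in s, (if dist x z < r then f z * b x else 0) := by
        apply integral_congr_ae
        refine Filter.Eventually.of_forall fun z => ?_
        show f z * (∫ x in s, (ball z r).indicator b x)
            = ∫ x in s, (if dist x z < r then f z * b x else 0)
        have e1 : ∫ x in s, (if dist x z < r then f z * b x else 0)
            = ∫ x in s, f z * (ball z r).indicator b x := by
          apply integral_congr_ae
          refine Filter.Eventually.of_forall fun x => ?_
          show (if dist x z < r then f z * b x else 0) = f z * (ball z r).indicator b x
          rw [indicator_ball_eq]
          simp only [mul_ite, mul_zero]
        rw [e1, integral_const_mul]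
    _ = ∫ x in s, ∫ z, (if dist x z < r then f z * b x else 0) := swap
    _ = ∫ x in s, b x * (∫ z in ball x r, f z) := by
        apply integral_congr_ae
        refine Filter.Eventually.of_forall fun x => ?_
        show (∫ z, (if dist x z < r then f z * b x else 0)) = b x * (∫ z in ball x r, f z)
        have h3 : (fun z => if dist x z < r then f z * b x else 0)
            = (ball x r).indicator (fun z => f z * b x) := by
          rw [indicator_ball_eq]
          funext z
          rw [dist_comm]
        rw [h3, integral_indicator measurableSet_ball, integral_mul_const, mul_comm]


lemma measurable_ballAvg (w : Eu → ℝ) (hwm : Measurable w) :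
    Measurable fun x : Eu => ballAvg d w x r := by
  have h : (fun x : Eu => ballAvg d w x r)
      = fun z => (volume (ball (0 : Eu) r)).toReal⁻¹ * ∫ x, (ball z r).indicator w x := by
    funext z
    unfold ballAvg
    rw [integral_indicator measurableSet_ball]
  rw [h]
  exact (meas_aux volume w hwm).const_mul _

lemma ballAvg_mem (hr : 0 < r) (w : Eu → ℝ) (hwm : Measurable w)
    (hw : ∀ x, w x ∈ Set.Icc (0 : ℝ) 1) (x : Eu) : ballAvg d w x r ∈ Set.Icc (0 : ℝ) 1 := by
  have hV : 0 < (volume (ball (0 : Eu) r)).toReal :=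
    ENNReal.toReal_pos (measure_ball_pos volume 0 hr).ne' measure_ball_lt_top.ne
  have h0 : 0 ≤ ∫ y in ball x r, w y :=
    setIntegral_nonneg measurableSet_ball fun y _ => (hw y).1
  have h1 : ∫ y in ball x r, w y ≤ (volume (ball (0 : Eu) r)).toReal := by
    calc ∫ y in ball x r, w y ≤ ∫ y in ball x r, (1 : ℝ) := by
          refine integral_mono ?_ ?_ fun y => (hw y).2
          · exact integrableOn_bdd hwm
              (C := 1) (fun y => abs_le.mpr ⟨by linarith [(hw y).1], (hw y).2⟩)
              measure_ball_lt_top.ne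
          · exact integrableOn_const measure_ball_lt_top.ne
      _ = (volume (ball x r)).toReal := by rw [setIntegral_const, smul_eq_mul, mul_one, measureReal_def]
      _ = _ := by rw [vol_ball_eq]
  unfold ballAvg
  constructor
  · exact mul_nonneg (inv_nonneg.2 hV.le) h0
  · calc (volume (ball (0 : Eu) r)).toReal⁻¹ * ∫ y in ball x r, w y
        ≤ (volume (ball (0 : Eu) r)).toReal⁻¹ * (volume (ball (0 : Eu) r)).toReal :=
          mul_le_mul_of_nonneg_left h1 (inv_nonneg.2 hV.le)
      _ = 1 := inv_mul_cancel₀ hV.ne'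

lemma inter_indicator (z₁ z₂ : Eu) (h : Eu → ℝ) :
    ∫ x in ball z₁ r ∩ ball z₂ r, h x = ∫ x in ball z₁ r, (ball z₂ r).indicator h x := by
  rw [integral_indicator measurableSet_ball, Measure.restrict_restrict measurableSet_ball,
    Set.inter_comm]

lemma sigmaR_eq (hr : 0 < r) (w : Eu → ℝ) (hwm : Measurable w)
    (hw : ∀ x, w x ∈ Set.Icc (0 : ℝ) 1) (z₁ z₂ : Eu) :
    sigmaR d r w z₁ z₂ = ((volume (ball (0 : Eu) r)).toReal ^ 2)⁻¹ *
      ((1 - w z₁) * (1 - w z₂) *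
          (∫ x in ball z₁ r, (ball z₂ r).indicator (fun x => ballAvg d w x r) x)
        + w z₁ * w z₂ *
          (∫ x in ball z₁ r, (ball z₂ r).indicator (fun x => 1 - ballAvg d w x r) x)) := by
  have hAm : Measurable fun x : Eu => ballAvg d w x r := measurable_ballAvg w hwm
  have hA1 : ∀ x : Eu, |ballAvg d w x r| ≤ 1 := fun x =>
    abs_le.mpr ⟨by linarith [(ballAvg_mem hr w hwm hw x).1], (ballAvg_mem hr w hwm hw x).2⟩
  have hvol : volume (ball z₁ r ∩ ball z₂ r) ≠ ⊤ :=
    (lt_of_le_of_lt (measure_mono Set.inter_subset_left) measure_ball_lt_top).ne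
  have i1 : IntegrableOn (fun x => ballAvg d w x r * (1 - w z₁) * (1 - w z₂))
      (ball z₁ r ∩ ball z₂ r) volume := by
    refine integrableOn_bdd ((hAm.mul measurable_const).mul measurable_const)
      (C := 1 * |1 - w z₁| * |1 - w z₂|) ?_ hvol
    intro x
    simp only [Pi.mul_apply, Pi.sub_apply]
    rw [abs_mul, abs_mul]
    exact mul_le_mul_of_nonneg_right
      (mul_le_mul_of_nonneg_right (hA1 x) (abs_nonneg _)) (abs_nonneg _)
  have i2 : IntegrableOn (fun x => (1 - ballAvg d w x r) * w z₁ * w z₂)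
      (ball z₁ r ∩ ball z₂ r) volume := by
    refine integrableOn_bdd (((measurable_const.sub hAm).mul measurable_const).mul
      measurable_const) (C := 1 * |w z₁| * |w z₂|) ?_ hvol
    intro x
    simp only [Pi.mul_apply, Pi.sub_apply]
    rw [abs_mul, abs_mul]
    refine mul_le_mul_of_nonneg_right
      (mul_le_mul_of_nonneg_right ?_ (abs_nonneg _)) (abs_nonneg _)
    exact abs_le.mpr ⟨by linarith [(ballAvg_mem hr w hwm hw x).2],
      by linarith [(ballAvg_mem hr w hwm hw x).1]⟩
  unfold sigmaR
  congr 1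
  rw [integral_add i1 i2, integral_mul_const, integral_mul_const, integral_mul_const,
    integral_mul_const, inter_indicator, inter_indicator]
  ring

end SigmaRAux


open SigmaRAux

theorem sigmaR_integral_identity (d : ℕ) (hd : 1 ≤ d) (r : ℝ) (hr : 0 < r)
    (w : EuclideanSpace ℝ (Fin d) → ℝ) (hwm : Measurable w)
    (hw : ∀ x, w x ∈ Set.Icc (0 : ℝ) 1)
    (φ : EuclideanSpace ℝ (Fin d) → ℝ) (hφi : Integrable φ volume)
    (hφb : ∃ M : ℝ, ∀ x, |φ x| ≤ M) :
    ∫ z₁ : EuclideanSpace ℝ (Fin d), ∫ z₂ : EuclideanSpace ℝ (Fin d),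
        φ z₁ * φ z₂ * sigmaR d r w z₁ z₂ =
      ∫ x : EuclideanSpace ℝ (Fin d),
        (ballAvg d w x r * (ballAvg d (fun y => φ y * (1 - w y)) x r) ^ 2 +
          (1 - ballAvg d w x r) * (ballAvg d (fun y => φ y * w y) x r) ^ 2) := by
  classical
  obtain ⟨φ', hφ'm, hφeq⟩ : ∃ φ' : EuclideanSpace ℝ (Fin d) → ℝ,
      Measurable φ' ∧ φ =ᵐ[volume] φ' :=
    ⟨hφi.1.mk φ, hφi.1.stronglyMeasurable_mk.measurable, hφi.1.ae_eq_mk⟩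
  have hφ'i : Integrable φ' volume := hφi.congr hφeq
  set g₁ : EuclideanSpace ℝ (Fin d) → ℝ := fun y => φ' y * (1 - w y) with hg₁def
  set g₂ : EuclideanSpace ℝ (Fin d) → ℝ := fun y => φ' y * w y with hg₂def
  set A : EuclideanSpace ℝ (Fin d) → ℝ := fun x => ballAvg d w x r with hAdef
  set V : ℝ := (volume (ball (0 : EuclideanSpace ℝ (Fin d)) r)).toReal with hVdef
  have hVpos : 0 < V :=
    ENNReal.toReal_pos (measure_ball_pos volume 0 hr).ne' measure_ball_lt_top.ne
  have hAm : Measurable A := measurable_ballAvg w hwm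
  have hA01 : ∀ x, A x ∈ Set.Icc (0 : ℝ) 1 := fun x => ballAvg_mem hr w hwm hw x
  have hAabs : ∀ x, |A x| ≤ 1 := fun x =>
    abs_le.mpr ⟨by linarith [(hA01 x).1], (hA01 x).2⟩
  have hA'abs : ∀ x, |1 - A x| ≤ 1 := fun x =>
    abs_le.mpr ⟨by linarith [(hA01 x).2], by linarith [(hA01 x).1]⟩
  have hg₁m : Measurable g₁ := hφ'm.mul (measurable_const.sub hwm)
  have hg₂m : Measurable g₂ := hφ'm.mul hwm
  have hg₁i : Integrable g₁ volume := by
    refine Integrable.mono' hφ'i.abs hg₁m.aestronglyMeasurable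
      (Filter.Eventually.of_forall fun y => ?_)
    simp only [hg₁def, Real.norm_eq_abs, abs_mul]
    calc |φ' y| * |1 - w y| ≤ |φ' y| * 1 :=
          mul_le_mul_of_nonneg_left
            (abs_le.mpr ⟨by linarith [(hw y).2], by linarith [(hw y).1]⟩) (abs_nonneg _)
      _ = |φ' y| := mul_one _
  have hg₂i : Integrable g₂ volume := by
    refine Integrable.mono' hφ'i.abs hg₂m.aestronglyMeasurable
      (Filter.Eventually.of_forall fun y => ?_)
    simp only [hg₂def, Real.norm_eq_abs, abs_mul]
    calc |φ' y| * |w y| ≤ |φ' y| * 1 :=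
          mul_le_mul_of_nonneg_left
            (abs_le.mpr ⟨by linarith [(hw y).1], (hw y).2⟩) (abs_nonneg _)
      _ = |φ' y| := mul_one _
  -- the ball integrals S₁, S₂ (kept as raw expressions)
  have hS₁m : Measurable fun x : EuclideanSpace ℝ (Fin d) => ∫ z in ball x r, g₁ z := by
    have h : (fun x : EuclideanSpace ℝ (Fin d) => ∫ z in ball x r, g₁ z)
        = fun x => ∫ z, (ball x r).indicator g₁ z := by
      funext x; rw [integral_indicator measurableSet_ball]
    rw [h]; exact meas_aux volume g₁ hg₁m
  have hS₂m : Measurable fun x : EuclideanSpace ℝ (Fin d) => ∫ z in ball x r, g₂ z := by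
    have h : (fun x : EuclideanSpace ℝ (Fin d) => ∫ z in ball x r, g₂ z)
        = fun x => ∫ z, (ball x r).indicator g₂ z := by
      funext x; rw [integral_indicator measurableSet_ball]
    rw [h]; exact meas_aux volume g₂ hg₂m
  have hN₁0 : 0 ≤ ∫ z, |g₁ z| := integral_nonneg fun z => abs_nonneg _
  have hN₂0 : 0 ≤ ∫ z, |g₂ z| := integral_nonneg fun z => abs_nonneg _
  have hS₁b : ∀ x, |∫ z in ball x r, g₁ z| ≤ ∫ z, |g₁ z| := by
    intro x
    have h1 := norm_integral_le_integral_norm (μ := volume.restrict (ball x r)) g₁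
    simp only [Real.norm_eq_abs] at h1
    exact h1.trans (setIntegral_le_integral hg₁i.abs
      (Filter.Eventually.of_forall fun z => abs_nonneg _))
  have hS₂b : ∀ x, |∫ z in ball x r, g₂ z| ≤ ∫ z, |g₂ z| := by
    intro x
    have h1 := norm_integral_le_integral_norm (μ := volume.restrict (ball x r)) g₂
    simp only [Real.norm_eq_abs] at h1
    exact h1.trans (setIntegral_le_integral hg₂i.abs
      (Filter.Eventually.of_forall fun z => abs_nonneg _))
  have hS₁i : Integrable (fun x : EuclideanSpace ℝ (Fin d) => ∫ z in ball x r, g₁ z) volume := by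
    have k := (key_int hr hg₁m hg₁i
      (measurable_const : Measurable fun _ : EuclideanSpace ℝ (Fin d) => (1 : ℝ))
      (C := 1) (fun x => by norm_num)).integral_prod_right
    refine k.congr (Filter.Eventually.of_forall fun y => ?_)
    show (∫ x, if dist y x < r then g₁ x * 1 else 0) = ∫ z in ball y r, g₁ z
    have h : (fun x => if dist y x < r then g₁ x * 1 else 0) = (ball y r).indicator g₁ := by
      rw [indicator_ball_eq]
      funext x
      rw [dist_comm y x, mul_one]
    rw [h, integral_indicator measurableSet_ball]
  have hS₂i : Integrable (fun x : EuclideanSpace ℝ (Fin d) => ∫ z in ball x r, g₂ z) volume := by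
    have k := (key_int hr hg₂m hg₂i
      (measurable_const : Measurable fun _ : EuclideanSpace ℝ (Fin d) => (1 : ℝ))
      (C := 1) (fun x => by norm_num)).integral_prod_right
    refine k.congr (Filter.Eventually.of_forall fun y => ?_)
    show (∫ x, if dist y x < r then g₂ x * 1 else 0) = ∫ z in ball y r, g₂ z
    have h : (fun x => if dist y x < r then g₂ x * 1 else 0) = (ball y r).indicator g₂ := by
      rw [indicator_ball_eq]
      funext x
      rw [dist_comm y x, mul_one]
    rw [h, integral_indicator measurableSet_ball]
  have huniv : ∀ (z : EuclideanSpace ℝ (Fin d)) (b : EuclideanSpace ℝ (Fin d) → ℝ),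
      (∫ x in (Set.univ : Set (EuclideanSpace ℝ (Fin d))), (ball z r).indicator b x)
        = ∫ x in ball z r, b x := by
    intro z b
    rw [Measure.restrict_univ, integral_indicator measurableSet_ball]
  -- Step A : the inner integral over z₂
  have stepA : ∀ z₁ : EuclideanSpace ℝ (Fin d),
      (∫ z₂, φ' z₁ * φ' z₂ * sigmaR d r w z₁ z₂)
        = (V ^ 2)⁻¹ *
          (g₁ z₁ * (∫ x in ball z₁ r, A x * ∫ z in ball x r, g₁ z)
            + g₂ z₁ * (∫ x in ball z₁ r, (1 - A x) * ∫ z in ball x r, g₂ z)) := by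
    intro z₁
    have hJ₁m : Measurable fun z₂ => ∫ x in ball z₁ r, (ball z₂ r).indicator A x :=
      meas_aux (volume.restrict (ball z₁ r)) A hAm
    have hJ₂m : Measurable fun z₂ =>
        ∫ x in ball z₁ r, (ball z₂ r).indicator (fun x => 1 - A x) x :=
      meas_aux (volume.restrict (ball z₁ r)) _ (measurable_const.sub hAm)
    have hJ₁b : ∀ z₂, |∫ x in ball z₁ r, (ball z₂ r).indicator A x| ≤ V := by
      intro z₂
      have h := bound_setIntegral (h := fun x => (ball z₂ r).indicator A x) (C := 1)
        (fun x => indicator_abs_le one_pos.le hAabs _ x) (s := ball z₁ r)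
        measure_ball_lt_top.ne
      rwa [one_mul, vol_ball_eq, ← hVdef] at h
    have hJ₂b : ∀ z₂, |∫ x in ball z₁ r, (ball z₂ r).indicator (fun x => 1 - A x) x| ≤ V := by
      intro z₂
      have h := bound_setIntegral (h := fun x => (ball z₂ r).indicator (fun x => 1 - A x) x)
        (C := 1) (fun x => indicator_abs_le one_pos.le hA'abs _ x) (s := ball z₁ r)
        measure_ball_lt_top.ne
      rwa [one_mul, vol_ball_eq, ← hVdef] at h
    have int1 : Integrable
        (fun z₂ => g₁ z₂ * ∫ x in ball z₁ r, (ball z₂ r).indicator A x) volume := by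
      refine Integrable.mono' (hg₁i.abs.mul_const V)
        ((hg₁m.mul hJ₁m).aestronglyMeasurable) (Filter.Eventually.of_forall fun z => ?_)
      rw [Real.norm_eq_abs, abs_mul]
      exact mul_le_mul_of_nonneg_left (hJ₁b z) (abs_nonneg _)
    have int2 : Integrable
        (fun z₂ => g₂ z₂ * ∫ x in ball z₁ r, (ball z₂ r).indicator (fun x => 1 - A x) x)
        volume := by
      refine Integrable.mono' (hg₂i.abs.mul_const V)
        ((hg₂m.mul hJ₂m).aestronglyMeasurable) (Filter.Eventually.of_forall fun z => ?_)
      rw [Real.norm_eq_abs, abs_mul]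
      exact mul_le_mul_of_nonneg_left (hJ₂b z) (abs_nonneg _)
    calc (∫ z₂, φ' z₁ * φ' z₂ * sigmaR d r w z₁ z₂)
        = ∫ z₂, (V ^ 2)⁻¹ *
            (g₁ z₁ * (g₁ z₂ * ∫ x in ball z₁ r, (ball z₂ r).indicator A x)
              + g₂ z₁ * (g₂ z₂ *
                  ∫ x in ball z₁ r, (ball z₂ r).indicator (fun x => 1 - A x) x)) := by
          refine integral_congr_ae (Filter.Eventually.of_forall fun z₂ => ?_)
          show φ' z₁ * φ' z₂ * sigmaR d r w z₁ z₂ = _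
          rw [sigmaR_eq hr w hwm hw z₁ z₂]
          simp only [hg₁def, hg₂def, hAdef, hVdef]
          ring
      _ = (V ^ 2)⁻¹ * ∫ z₂,
            (g₁ z₁ * (g₁ z₂ * ∫ x in ball z₁ r, (ball z₂ r).indicator A x)
              + g₂ z₁ * (g₂ z₂ *
                  ∫ x in ball z₁ r, (ball z₂ r).indicator (fun x => 1 - A x) x)) :=
          integral_const_mul _ _
      _ = (V ^ 2)⁻¹ *
            (g₁ z₁ * (∫ z₂, g₁ z₂ * ∫ x in ball z₁ r, (ball z₂ r).indicator A x)
              + g₂ z₁ * (∫ z₂, g₂ z₂ *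
                  ∫ x in ball z₁ r, (ball z₂ r).indicator (fun x => 1 - A x) x)) := by
          rw [integral_add (int1.const_mul _) (int2.const_mul _),
            integral_const_mul, integral_const_mul]
      _ = (V ^ 2)⁻¹ *
            (g₁ z₁ * (∫ x in ball z₁ r, A x * ∫ z in ball x r, g₁ z)
              + g₂ z₁ * (∫ x in ball z₁ r, (1 - A x) * ∫ z in ball x r, g₂ z)) := by
          rw [core hr measurableSet_ball hg₁m hg₁i hAm hAabs,
            core (b := fun x => 1 - A x) hr measurableSet_ball hg₂m hg₂i (measurable_const.sub hAm) hA'abs]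
  -- Step B facts
  have hT₁m : Measurable fun z : EuclideanSpace ℝ (Fin d) =>
      ∫ x in ball z r, A x * ∫ y in ball x r, g₁ y := by
    have h : (fun z : EuclideanSpace ℝ (Fin d) =>
          ∫ x in ball z r, A x * ∫ y in ball x r, g₁ y)
        = fun z => ∫ x, (ball z r).indicator (fun x => A x * ∫ y in ball x r, g₁ y) x := by
      funext z; rw [integral_indicator measurableSet_ball]
    rw [h]; exact meas_aux volume _ (hAm.mul hS₁m)
  have hT₂m : Measurable fun z : EuclideanSpace ℝ (Fin d) =>
      ∫ x in ball z r, (1 - A x) * ∫ y in ball x r, g₂ y := by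
    have h : (fun z : EuclideanSpace ℝ (Fin d) =>
          ∫ x in ball z r, (1 - A x) * ∫ y in ball x r, g₂ y)
        = fun z => ∫ x, (ball z r).indicator
            (fun x => (1 - A x) * ∫ y in ball x r, g₂ y) x := by
      funext z; rw [integral_indicator measurableSet_ball]
    rw [h]; exact meas_aux volume _ ((measurable_const.sub hAm).mul hS₂m)
  have hb₁ : ∀ x, |A x * ∫ y in ball x r, g₁ y| ≤ ∫ z, |g₁ z| := by
    intro x
    rw [abs_mul]
    calc |A x| * |∫ y in ball x r, g₁ y| ≤ 1 * (∫ z, |g₁ z|) :=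
          mul_le_mul (hAabs x) (hS₁b x) (abs_nonneg _) one_pos.le
      _ = ∫ z, |g₁ z| := one_mul _
  have hb₂ : ∀ x, |(1 - A x) * ∫ y in ball x r, g₂ y| ≤ ∫ z, |g₂ z| := by
    intro x
    rw [abs_mul]
    calc |1 - A x| * |∫ y in ball x r, g₂ y| ≤ 1 * (∫ z, |g₂ z|) :=
          mul_le_mul (hA'abs x) (hS₂b x) (abs_nonneg _) one_pos.le
      _ = ∫ z, |g₂ z| := one_mul _
  have hT₁b : ∀ z, |∫ x in ball z r, A x * ∫ y in ball x r, g₁ y| ≤ (∫ z, |g₁ z|) * V := by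
    intro z
    have h := bound_setIntegral (h := fun x => A x * ∫ y in ball x r, g₁ y)
      (C := ∫ z, |g₁ z|) hb₁ (s := ball z r) measure_ball_lt_top.ne
    rwa [vol_ball_eq, ← hVdef] at h
  have hT₂b : ∀ z, |∫ x in ball z r, (1 - A x) * ∫ y in ball x r, g₂ y|
      ≤ (∫ z, |g₂ z|) * V := by
    intro z
    have h := bound_setIntegral (h := fun x => (1 - A x) * ∫ y in ball x r, g₂ y)
      (C := ∫ z, |g₂ z|) hb₂ (s := ball z r) measure_ball_lt_top.ne
    rwa [vol_ball_eq, ← hVdef] at h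
  have intB1 : Integrable
      (fun z => g₁ z * ∫ x in ball z r, A x * ∫ y in ball x r, g₁ y) volume := by
    refine Integrable.mono' (hg₁i.abs.mul_const ((∫ z, |g₁ z|) * V))
      ((hg₁m.mul hT₁m).aestronglyMeasurable) (Filter.Eventually.of_forall fun z => ?_)
    rw [Real.norm_eq_abs, abs_mul]
    exact mul_le_mul_of_nonneg_left (hT₁b z) (abs_nonneg _)
  have intB2 : Integrable
      (fun z => g₂ z * ∫ x in ball z r, (1 - A x) * ∫ y in ball x r, g₂ y) volume := by
    refine Integrable.mono' (hg₂i.abs.mul_const ((∫ z, |g₂ z|) * V))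
      ((hg₂m.mul hT₂m).aestronglyMeasurable) (Filter.Eventually.of_forall fun z => ?_)
    rw [Real.norm_eq_abs, abs_mul]
    exact mul_le_mul_of_nonneg_left (hT₂b z) (abs_nonneg _)
  -- Step B : the two swap identities over the whole space
  have coreB1 : (∫ z, g₁ z * ∫ x in ball z r, A x * ∫ y in ball x r, g₁ y)
      = ∫ x, (A x * ∫ y in ball x r, g₁ y) * ∫ z in ball x r, g₁ z := by
    have h := core hr (MeasurableSet.univ)
      hg₁m hg₁i (hAm.mul hS₁m) hb₁
    calc (∫ z, g₁ z * ∫ x in ball z r, A x * ∫ y in ball x r, g₁ y)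
        = ∫ z, g₁ z * ∫ x in (Set.univ : Set (EuclideanSpace ℝ (Fin d))),
            (ball z r).indicator (fun x => A x * ∫ y in ball x r, g₁ y) x := by
          refine integral_congr_ae (Filter.Eventually.of_forall fun z => ?_)
          show g₁ z * (∫ x in ball z r, A x * ∫ y in ball x r, g₁ y)
              = g₁ z * ∫ x in (Set.univ : Set (EuclideanSpace ℝ (Fin d))),
                  (ball z r).indicator (fun x => A x * ∫ y in ball x r, g₁ y) x
          rw [huniv]
      _ = ∫ x in (Set.univ : Set (EuclideanSpace ℝ (Fin d))),
            (A x * ∫ y in ball x r, g₁ y) * ∫ z in ball x r, g₁ z := h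
      _ = ∫ x, (A x * ∫ y in ball x r, g₁ y) * ∫ z in ball x r, g₁ z := by
          rw [Measure.restrict_univ]
  have coreB2 : (∫ z, g₂ z * ∫ x in ball z r, (1 - A x) * ∫ y in ball x r, g₂ y)
      = ∫ x, ((1 - A x) * ∫ y in ball x r, g₂ y) * ∫ z in ball x r, g₂ z := by
    have h := core hr (MeasurableSet.univ)
      hg₂m hg₂i ((measurable_const.sub hAm).mul hS₂m) hb₂
    calc (∫ z, g₂ z * ∫ x in ball z r, (1 - A x) * ∫ y in ball x r, g₂ y)
        = ∫ z, g₂ z * ∫ x in (Set.univ : Set (EuclideanSpace ℝ (Fin d))),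
            (ball z r).indicator (fun x => (1 - A x) * ∫ y in ball x r, g₂ y) x := by
          refine integral_congr_ae (Filter.Eventually.of_forall fun z => ?_)
          show g₂ z * (∫ x in ball z r, (1 - A x) * ∫ y in ball x r, g₂ y)
              = g₂ z * ∫ x in (Set.univ : Set (EuclideanSpace ℝ (Fin d))),
                  (ball z r).indicator (fun x => (1 - A x) * ∫ y in ball x r, g₂ y) x
          rw [huniv]
      _ = ∫ x in (Set.univ : Set (EuclideanSpace ℝ (Fin d))),
            ((1 - A x) * ∫ y in ball x r, g₂ y) * ∫ z in ball x r, g₂ z := h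
      _ = ∫ x, ((1 - A x) * ∫ y in ball x r, g₂ y) * ∫ z in ball x r, g₂ z := by
          rw [Measure.restrict_univ]
  -- integrability for the right-hand side split
  have intC1 : Integrable
      (fun x => (A x * ∫ y in ball x r, g₁ y) * ∫ z in ball x r, g₁ z) volume := by
    refine Integrable.mono' (hS₁i.abs.const_mul (∫ z, |g₁ z|))
      (((hAm.mul hS₁m).mul hS₁m).aestronglyMeasurable)
      (Filter.Eventually.of_forall fun x => ?_)
    rw [Real.norm_eq_abs, abs_mul]
    exact mul_le_mul_of_nonneg_right (hb₁ x) (abs_nonneg _)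
  have intC2 : Integrable
      (fun x => ((1 - A x) * ∫ y in ball x r, g₂ y) * ∫ z in ball x r, g₂ z) volume := by
    refine Integrable.mono' (hS₂i.abs.const_mul (∫ z, |g₂ z|))
      ((((measurable_const.sub hAm).mul hS₂m).mul hS₂m).aestronglyMeasurable)
      (Filter.Eventually.of_forall fun x => ?_)
    rw [Real.norm_eq_abs, abs_mul]
    exact mul_le_mul_of_nonneg_right (hb₂ x) (abs_nonneg _)
  -- Left-hand side computation
  have hLHS : (∫ z₁, ∫ z₂, φ z₁ * φ z₂ * sigmaR d r w z₁ z₂)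
      = (V ^ 2)⁻¹ *
        ((∫ x, (A x * ∫ y in ball x r, g₁ y) * ∫ z in ball x r, g₁ z)
          + ∫ x, ((1 - A x) * ∫ y in ball x r, g₂ y) * ∫ z in ball x r, g₂ z) := by
    calc (∫ z₁, ∫ z₂, φ z₁ * φ z₂ * sigmaR d r w z₁ z₂)
        = ∫ z₁, ∫ z₂, φ' z₁ * φ' z₂ * sigmaR d r w z₁ z₂ := by
          apply integral_congr_ae
          filter_upwards [hφeq] with z₁ h₁
          apply integral_congr_ae
          filter_upwards [hφeq] with z₂ h₂
          show φ z₁ * φ z₂ * sigmaR d r w z₁ z₂ = φ' z₁ * φ' z₂ * sigmaR d r w z₁ z₂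
          rw [h₁, h₂]
      _ = ∫ z₁, (V ^ 2)⁻¹ *
            (g₁ z₁ * (∫ x in ball z₁ r, A x * ∫ z in ball x r, g₁ z)
              + g₂ z₁ * (∫ x in ball z₁ r, (1 - A x) * ∫ z in ball x r, g₂ z)) :=
          integral_congr_ae (Filter.Eventually.of_forall stepA)
      _ = (V ^ 2)⁻¹ *
            ((∫ z₁, g₁ z₁ * ∫ x in ball z₁ r, A x * ∫ z in ball x r, g₁ z)
              + (∫ z₁, g₂ z₁ * ∫ x in ball z₁ r, (1 - A x) * ∫ z in ball x r, g₂ z)) := by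
          rw [integral_const_mul, integral_add intB1 intB2]
      _ = (V ^ 2)⁻¹ *
            ((∫ x, (A x * ∫ y in ball x r, g₁ y) * ∫ z in ball x r, g₁ z)
              + ∫ x, ((1 - A x) * ∫ y in ball x r, g₂ y) * ∫ z in ball x r, g₂ z) := by
          rw [coreB1, coreB2]
  -- Right-hand side computation
  have hRHS : (∫ x : EuclideanSpace ℝ (Fin d),
        (ballAvg d w x r * (ballAvg d (fun y => φ y * (1 - w y)) x r) ^ 2 +
          (1 - ballAvg d w x r) * (ballAvg d (fun y => φ y * w y) x r) ^ 2))
      = (V ^ 2)⁻¹ *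
        ((∫ x, (A x * ∫ y in ball x r, g₁ y) * ∫ z in ball x r, g₁ z)
          + ∫ x, ((1 - A x) * ∫ y in ball x r, g₂ y) * ∫ z in ball x r, g₂ z) := by
    have hpt : ∀ x : EuclideanSpace ℝ (Fin d),
        ballAvg d w x r * (ballAvg d (fun y => φ y * (1 - w y)) x r) ^ 2 +
          (1 - ballAvg d w x r) * (ballAvg d (fun y => φ y * w y) x r) ^ 2
        = (V ^ 2)⁻¹ * ((A x * ∫ y in ball x r, g₁ y) * (∫ z in ball x r, g₁ z)
            + ((1 - A x) * ∫ y in ball x r, g₂ y) * ∫ z in ball x r, g₂ z) := by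
      intro x
      have e₁ : ballAvg d (fun y => φ y * (1 - w y)) x r = V⁻¹ * ∫ y in ball x r, g₁ y := by
        unfold ballAvg
        rw [← hVdef]
        congr 1
        refine integral_congr_ae (ae_restrict_of_ae (hφeq.mono fun y hy => ?_))
        simp only [hg₁def, hy]
      have e₂ : ballAvg d (fun y => φ y * w y) x r = V⁻¹ * ∫ y in ball x r, g₂ y := by
        unfold ballAvg
        rw [← hVdef]
        congr 1
        refine integral_congr_ae (ae_restrict_of_ae (hφeq.mono fun y hy => ?_))
        simp only [hg₂def, hy]
      rw [e₁, e₂]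
      simp only [hAdef]
      have hV' : V ≠ 0 := hVpos.ne'
      field_simp
    calc (∫ x : EuclideanSpace ℝ (Fin d),
          (ballAvg d w x r * (ballAvg d (fun y => φ y * (1 - w y)) x r) ^ 2 +
            (1 - ballAvg d w x r) * (ballAvg d (fun y => φ y * w y) x r) ^ 2))
        = ∫ x, (V ^ 2)⁻¹ * ((A x * ∫ y in ball x r, g₁ y) * (∫ z in ball x r, g₁ z)
            + ((1 - A x) * ∫ y in ball x r, g₂ y) * ∫ z in ball x r, g₂ z) :=
          integral_congr_ae (Filter.Eventually.of_forall hpt)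
      _ = (V ^ 2)⁻¹ *
            ((∫ x, (A x * ∫ y in ball x r, g₁ y) * ∫ z in ball x r, g₁ z)
              + ∫ x, ((1 - A x) * ∫ y in ball x r, g₂ y) * ∫ z in ball x r, g₂ z) := by
          rw [integral_const_mul, integral_add intC1 intC2]
  rw [hLHS, hRHS]
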